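/- (Case 0 of Table I.) If N1 ≥ N2 ≥ M1, then Pd = Ph1 = Ph2 = Pi, and all four regions equal {(d1,d2) ∈ ℝ² : 0 ≤ d1 ≤ M1, 0 ≤ d2 ≤ min(M2,N2), d1+d2 ≤ min(N2, M1+M2)}. -/

import Mathlib

open Set

noncomputable section

/-- Bound L01 : 0 ≤ d1 ≤ min(M1,N1). -/
def L01 (M1 N1 : ℕ) (d : ℝ × ℝ) : Prop := 0 ≤ d.1 ∧ d.1 ≤ min (M1 : ℝ) (N1 : ℝ)

/-- Bound L02 : 0 ≤ d2 ≤ min(M2,N2). -/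
def L02 (M2 N2 : ℕ) (d : ℝ × ℝ) : Prop := 0 ≤ d.2 ∧ d.2 ≤ min (M2 : ℝ) (N2 : ℝ)

/-- Bound L1 : d1/min(N1+N2,M1) + d2/min(N2,M1) ≤ min(N2,M1+M2)/min(N2,M1). -/
def L1 (M1 M2 N1 N2 : ℕ) (d : ℝ × ℝ) : Prop :=
  d.1 / min ((N1 : ℝ) + (N2 : ℝ)) (M1 : ℝ) + d.2 / min (N2 : ℝ) (M1 : ℝ) ≤
    min (N2 : ℝ) ((M1 : ℝ) + (M2 : ℝ)) / min (N2 : ℝ) (M1 : ℝ)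

/-- Bound L2 : d1/min(N1,M2) + d2/min(N1+N2,M2) ≤ min(N1,M1+M2)/min(N1,M2). -/
def L2 (M1 M2 N1 N2 : ℕ) (d : ℝ × ℝ) : Prop :=
  d.1 / min (N1 : ℝ) (M2 : ℝ) + d.2 / min ((N1 : ℝ) + (N2 : ℝ)) (M2 : ℝ) ≤
    min (N1 : ℝ) ((M1 : ℝ) + (M2 : ℝ)) / min (N1 : ℝ) (M2 : ℝ)

/-- Bound L3 : d1+d2 ≤ min(M1+M2, N1+N2, max(M1,N2), max(M2,N1)). -/
def L3 (M1 M2 N1 N2 : ℕ) (d : ℝ × ℝ) : Prop :=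
  d.1 + d.2 ≤
    min (min ((M1 : ℝ) + (M2 : ℝ)) ((N1 : ℝ) + (N2 : ℝ)))
      (min (max (M1 : ℝ) (N2 : ℝ)) (max (M2 : ℝ) (N1 : ℝ)))

/-- Bound L4 : d1 + d2·(N1+2N2−M2)/N2 ≤ N1+N2. -/
def L4 (M2 N1 N2 : ℕ) (d : ℝ × ℝ) : Prop :=
  d.1 + d.2 * (((N1 : ℝ) + 2 * (N2 : ℝ) - (M2 : ℝ)) / (N2 : ℝ)) ≤ (N1 : ℝ) + (N2 : ℝ)

/-- Bound L5 : d2 + d1·(N2+2N1−M1)/N1 ≤ N1+N2. -/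
def L5 (M1 N1 N2 : ℕ) (d : ℝ × ℝ) : Prop :=
  d.2 + d.1 * (((N2 : ℝ) + 2 * (N1 : ℝ) - (M1 : ℝ)) / (N1 : ℝ)) ≤ (N1 : ℝ) + (N2 : ℝ)

/-- Condition 1 : M1 > N1+N2−M2 > N1 > N2 > M2 > N2(N2−M2)/(N1−M2). -/
def Cond1 (M1 M2 N1 N2 : ℕ) : Prop :=
  (M1 : ℝ) > (N1 : ℝ) + (N2 : ℝ) - (M2 : ℝ) ∧
  (N1 : ℝ) + (N2 : ℝ) - (M2 : ℝ) > (N1 : ℝ) ∧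
  (N1 : ℝ) > (N2 : ℝ) ∧ (N2 : ℝ) > (M2 : ℝ) ∧
  (M2 : ℝ) > (N2 : ℝ) * ((N2 : ℝ) - (M2 : ℝ)) / ((N1 : ℝ) - (M2 : ℝ))

/-- Condition 2 : M2 > N1+N2−M1 > N2 > N1 > M1 > N1(N1−M1)/(N2−M1). -/
def Cond2 (M1 M2 N1 N2 : ℕ) : Prop :=
  (M2 : ℝ) > (N1 : ℝ) + (N2 : ℝ) - (M1 : ℝ) ∧
  (N1 : ℝ) + (N2 : ℝ) - (M1 : ℝ) > (N2 : ℝ) ∧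
  (N2 : ℝ) > (N1 : ℝ) ∧ (N1 : ℝ) > (M1 : ℝ) ∧
  (M1 : ℝ) > (N1 : ℝ) * ((N1 : ℝ) - (M1 : ℝ)) / ((N2 : ℝ) - (M1 : ℝ))

/-- DoF outer-bound region under perfect and instantaneous CSIT. -/
def Pinst (M1 M2 N1 N2 : ℕ) : Set (ℝ × ℝ) :=
  {d | L01 M1 N1 d ∧ L02 M2 N2 d ∧ L3 M1 M2 N1 N2 d}

/-- DoF outer-bound region under hybrid CSIT 1. -/
def Ph1 (M1 M2 N1 N2 : ℕ) : Set (ℝ × ℝ) :=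
  {d | L01 M1 N1 d ∧ L02 M2 N2 d ∧ L2 M1 M2 N1 N2 d ∧ L3 M1 M2 N1 N2 d ∧
    (Cond2 M1 M2 N1 N2 → L5 M1 N1 N2 d)}

/-- DoF outer-bound region under hybrid CSIT 2. -/
def Ph2 (M1 M2 N1 N2 : ℕ) : Set (ℝ × ℝ) :=
  {d | L01 M1 N1 d ∧ L02 M2 N2 d ∧ L1 M1 M2 N1 N2 d ∧ L3 M1 M2 N1 N2 d ∧
    (Cond1 M1 M2 N1 N2 → L4 M2 N1 N2 d)}

/-- DoF outer-bound region under delayed CSIT. -/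
def Pd (M1 M2 N1 N2 : ℕ) : Set (ℝ × ℝ) :=
  {d | L01 M1 N1 d ∧ L02 M2 N2 d ∧ L1 M1 M2 N1 N2 d ∧ L2 M1 M2 N1 N2 d ∧
    L3 M1 M2 N1 N2 d ∧ (Cond1 M1 M2 N1 N2 → L4 M2 N1 N2 d) ∧
    (Cond2 M1 M2 N1 N2 → L5 M1 N1 N2 d)}

/-- Case 0 of Table I: if N1 ≥ N2 ≥ M1, then Pd = Ph1 = Ph2 = Pi, all equal to
{(d1,d2) : 0 ≤ d1 ≤ M1, 0 ≤ d2 ≤ min(M2,N2), d1+d2 ≤ min(N2, M1+M2)}. -/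
theorem case0_all_regions_equal (M1 M2 N1 N2 : ℕ)
    (hM1 : 0 < M1) (hM2 : 0 < M2) (hN1 : 0 < N1) (hN2 : 0 < N2)
    (h1 : N1 ≥ N2) (h2 : N2 ≥ M1) :
    Pd M1 M2 N1 N2 = Ph1 M1 M2 N1 N2 ∧
    Ph1 M1 M2 N1 N2 = Ph2 M1 M2 N1 N2 ∧
    Ph2 M1 M2 N1 N2 = Pinst M1 M2 N1 N2 ∧
    Pinst M1 M2 N1 N2 =
      {d : ℝ × ℝ | 0 ≤ d.1 ∧ d.1 ≤ (M1 : ℝ) ∧ 0 ≤ d.2 ∧ d.2 ≤ min (M2 : ℝ) (N2 : ℝ) ∧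
        d.1 + d.2 ≤ min (N2 : ℝ) ((M1 : ℝ) + (M2 : ℝ))} := by
  classical
  have hm1 : (M1:ℝ) ≤ N2 := by exact_mod_cast h2
  have hn : (N2:ℝ) ≤ N1 := by exact_mod_cast h1
  have pM1 : (0:ℝ) < M1 := by exact_mod_cast hM1
  have pM2 : (0:ℝ) < M2 := by exact_mod_cast hM2
  have pN1 : (0:ℝ) < N1 := by exact_mod_cast hN1
  have pN2 : (0:ℝ) < N2 := by exact_mod_cast hN2
  have hC1 : ¬ Cond1 M1 M2 N1 N2 := by
    rintro ⟨a, b, -, -, -⟩; linarith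
  have hC2 : ¬ Cond2 M1 M2 N1 N2 := by
    rintro ⟨-, -, c, -, -⟩; linarith
  have hL3eq : min (min ((M1:ℝ)+(M2:ℝ)) ((N1:ℝ)+(N2:ℝ)))
      (min (max (M1:ℝ) (N2:ℝ)) (max (M2:ℝ) (N1:ℝ)))
      = min (N2:ℝ) ((M1:ℝ)+(M2:ℝ)) := by
    rw [max_eq_right hm1]
    apply le_antisymm
    · apply le_min
      · exact min_le_of_right_le (min_le_left _ _)
      · exact min_le_of_left_le (min_le_left _ _)
    · apply le_min
      · exact le_min (min_le_right _ _)
          (le_trans (min_le_left _ _) (by linarith))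
      · exact le_min (min_le_left _ _)
          (le_trans (min_le_left _ _) (hn.trans (le_max_right _ _)))
  have hL01eq : min (M1:ℝ) (N1:ℝ) = (M1:ℝ) := min_eq_left (hm1.trans hn)
  -- L1 and L2 follow from the basic bounds
  have hL1 : ∀ d : ℝ × ℝ, 0 ≤ d.2 → d.1 + d.2 ≤ min (N2:ℝ) ((M1:ℝ)+(M2:ℝ)) →
      L1 M1 M2 N1 N2 d := by
    intro d _ h3
    unfold L1
    rw [min_eq_right (by linarith : (M1:ℝ) ≤ (N1:ℝ)+(N2:ℝ)),
        min_eq_right hm1, ← add_div, div_le_div_iff_of_pos_right pM1]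
    exact h3
  have hL2 : ∀ d : ℝ × ℝ, 0 ≤ d.2 → d.1 + d.2 ≤ min (N2:ℝ) ((M1:ℝ)+(M2:ℝ)) →
      L2 M1 M2 N1 N2 d := by
    intro d h2d h3
    unfold L2
    have ha : (0:ℝ) < min (N1:ℝ) (M2:ℝ) := lt_min pN1 pM2
    have hab : min (N1:ℝ) (M2:ℝ) ≤ min ((N1:ℝ)+(N2:ℝ)) (M2:ℝ) :=
      min_le_min (by linarith) le_rfl
    have step1 : d.1 / min (N1:ℝ) (M2:ℝ) + d.2 / min ((N1:ℝ)+(N2:ℝ)) (M2:ℝ) ≤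
        (d.1 + d.2) / min (N1:ℝ) (M2:ℝ) := by
      rw [add_div]
      gcongr
    refine step1.trans ?_
    gcongr
    calc d.1 + d.2 ≤ min (N2:ℝ) ((M1:ℝ)+(M2:ℝ)) := h3
      _ ≤ min (N1:ℝ) ((M1:ℝ)+(M2:ℝ)) := min_le_min hn le_rfl
  have hPinst : Pinst M1 M2 N1 N2 =
      {d : ℝ × ℝ | 0 ≤ d.1 ∧ d.1 ≤ (M1 : ℝ) ∧ 0 ≤ d.2 ∧ d.2 ≤ min (M2 : ℝ) (N2 : ℝ) ∧
        d.1 + d.2 ≤ min (N2 : ℝ) ((M1 : ℝ) + (M2 : ℝ))} := by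
    ext d
    simp only [Pinst, L01, L02, L3, mem_setOf_eq, hL01eq, hL3eq]
    tauto
  have hPd : Pd M1 M2 N1 N2 = Pinst M1 M2 N1 N2 := by
    ext d
    simp only [Pd, Pinst, mem_setOf_eq]
    constructor
    · rintro ⟨a, b, -, -, c, -, -⟩; exact ⟨a, b, c⟩
    · rintro ⟨a, b, c⟩
      have c' := c
      rw [L3, hL3eq] at c'
      exact ⟨a, b, hL1 d b.1 c', hL2 d b.1 c', c,
        fun h => absurd h hC1, fun h => absurd h hC2⟩
  have hPh1 : Ph1 M1 M2 N1 N2 = Pinst M1 M2 N1 N2 := by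
    ext d
    simp only [Ph1, Pinst, mem_setOf_eq]
    constructor
    · rintro ⟨a, b, -, c, -⟩; exact ⟨a, b, c⟩
    · rintro ⟨a, b, c⟩
      have c' := c
      rw [L3, hL3eq] at c'
      exact ⟨a, b, hL2 d b.1 c', c, fun h => absurd h hC2⟩
  have hPh2 : Ph2 M1 M2 N1 N2 = Pinst M1 M2 N1 N2 := by
    ext d
    simp only [Ph2, Pinst, mem_setOf_eq]
    constructor
    · rintro ⟨a, b, -, c, -⟩; exact ⟨a, b, c⟩
    · rintro ⟨a, b, c⟩
      have c' := c
      rw [L3, hL3eq] at c'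
      exact ⟨a, b, hL1 d b.1 c', c, fun h => absurd h hC1⟩
  exact ⟨hPd.trans hPh1.symm, hPh1.trans hPh2.symm, hPh2, hPinst⟩
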